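/- arXiv:0905.2325 — 2 statements merged into one kernel-verified Lean document; each statement's English description precedes it below -/
import Mathlib

section
/- Let K be a field of characteristic ≠ 2, and let λ, μ, ν ∈ K satisfy λ = μ(1-ν)/(1-μ) (with μ ≠ 1). Suppose q ∈ K satisfies q² = μ(μ-ν) and q ≠ ±μ, q ≠ ±(1-μ). Then for any point (x,y) on the curve y² = x(x-1)(x-λ)(x-μ)(x-ν) with x ≠ μ - q, the pair (X,Y) = (((x-μ-q)/(x-μ+q))², w·y/(x-μ+q)³) with w = 8q/((μ-q)(-1+μ-q)) satisfies χ·Y² = (X-1)(X-x₂²)(X-x₃²) where x₂ = (μ+q)/(μ-q), x₃ = (1-μ-q)/(1-μ+q), χ = -q·μ(μ-1). -/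
set_option maxHeartbeats 4000000 in
set_option maxRecDepth 4000 in
theorem stmt_5 {K : Type*} [Field K] (hchar : (2 : K) ≠ 0)
    (μ ν lam q : K) (hμ0 : μ ≠ 0) (hμ1 : μ ≠ 1)
    (hlam : lam = μ * (1 - ν) / (1 - μ))
    (hq : q ^ 2 = μ * (μ - ν)) (hq0 : q ≠ 0)
    (h1 : μ - q ≠ 0) (h2 : μ + q ≠ 0) (h3 : 1 - μ + q ≠ 0) (h4 : 1 - μ - q ≠ 0)
    (x₂ x₃ χ w : K)
    (hx₂ : x₂ = (μ + q) / (μ - q)) (hx₃ : x₃ = (1 - μ - q) / (1 - μ + q))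
    (hχ : χ = -q * μ * (μ - 1)) (hw : w = 8 * q / ((μ - q) * (-1 + μ - q))) :
    ∀ x y : K, y ^ 2 = x * (x - 1) * (x - lam) * (x - μ) * (x - ν) →
      x - μ + q ≠ 0 →
      χ * (w * y / (x - μ + q) ^ 3) ^ 2 =
        (((x - μ - q) / (x - μ + q)) ^ 2 - 1) *
        (((x - μ - q) / (x - μ + q)) ^ 2 - x₂ ^ 2) *
        (((x - μ - q) / (x - μ + q)) ^ 2 - x₃ ^ 2) := by
  intro x y hy hne
  have hμ1' : (1 : K) - μ ≠ 0 := sub_ne_zero.mpr (Ne.symm hμ1)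
  have hν : μ * ν = μ ^ 2 - q ^ 2 := by linear_combination hq
  have hl : (1 - μ) * lam = μ * (1 - ν) := by
    rw [hlam]; field_simp
  have key : (-(64 : K)) * q ^ 3 * μ * (μ - 1) * y ^ 2 =
      (-(4 : K) * q * (x - μ)) *
      ((μ - q) ^ 2 * (x - μ - q) ^ 2 - (μ + q) ^ 2 * (x - μ + q) ^ 2) *
      ((1 - μ + q) ^ 2 * (x - μ - q) ^ 2 - (1 - μ - q) ^ 2 * (x - μ + q) ^ 2) := by
    rw [hy]
    linear_combination ((-(64 : K)) * q ^ 3 * μ * x * (x - 1) * (x - μ) * (x - ν)) * hl +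
      (64 * x * q ^ 3 *
        (μ * q ^ 2 + μ ^ 2 - μ ^ 2 * ν - μ ^ 3 - x * q ^ 2 - 2 * x * μ + x * μ * ν
          - x * μ * q ^ 2 + 2 * x * μ ^ 2 + x * μ ^ 2 * ν + x * μ ^ 3 + x ^ 2
          + x ^ 2 * q ^ 2 - x ^ 2 * μ * ν - 3 * x ^ 2 * μ ^ 2 - x ^ 3 + 2 * x ^ 3 * μ)) * hν
  have h3' : (-1 : K) + μ - q ≠ 0 := fun h => h3 (by linear_combination -h)
  have hD1 : ((μ - q) ^ 2 * (1 - μ + q) ^ 2 * (x - μ + q) ^ 6 : K) ≠ 0 :=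
    mul_ne_zero (mul_ne_zero (pow_ne_zero _ h1) (pow_ne_zero _ h3)) (pow_ne_zero _ hne)
  have hD2 : ((x - μ + q) ^ 2 * ((x - μ + q) ^ 2 * (μ - q) ^ 2) *
      ((x - μ + q) ^ 2 * (1 - μ + q) ^ 2) : K) ≠ 0 :=
    mul_ne_zero (mul_ne_zero (pow_ne_zero _ hne)
      (mul_ne_zero (pow_ne_zero _ hne) (pow_ne_zero _ h1)))
      (mul_ne_zero (pow_ne_zero _ hne) (pow_ne_zero _ h3))
  have L : χ * (w * y / (x - μ + q) ^ 3) ^ 2 =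
      (-(64 : K) * q ^ 3 * μ * (μ - 1) * y ^ 2) /
        ((μ - q) ^ 2 * (1 - μ + q) ^ 2 * (x - μ + q) ^ 6) := by
    rw [hχ, hw]
    field_simp
    ring
  have e1 : ((x - μ - q) / (x - μ + q)) ^ 2 - 1 =
      ((x - μ - q) ^ 2 - (x - μ + q) ^ 2) / (x - μ + q) ^ 2 := by
    field_simp
  have e2 : ((x - μ - q) / (x - μ + q)) ^ 2 - x₂ ^ 2 =
      ((μ - q) ^ 2 * (x - μ - q) ^ 2 - (μ + q) ^ 2 * (x - μ + q) ^ 2) /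
        ((x - μ + q) ^ 2 * (μ - q) ^ 2) := by
    rw [hx₂]
    field_simp
  have e3 : ((x - μ - q) / (x - μ + q)) ^ 2 - x₃ ^ 2 =
      ((1 - μ + q) ^ 2 * (x - μ - q) ^ 2 - (1 - μ - q) ^ 2 * (x - μ + q) ^ 2) /
        ((x - μ + q) ^ 2 * (1 - μ + q) ^ 2) := by
    rw [hx₃]
    field_simp
  rw [L, e1, e2, e3, div_mul_div_comm, div_mul_div_comm, div_eq_div_iff hD1 hD2]
  linear_combination ((μ - q) ^ 2 * (1 - μ + q) ^ 2 * (x - μ + q) ^ 6) * key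
end

section
/- Let K be a field of characteristic ≠ 2 and s, u, v ∈ K with s, u, v ≠ 0, s ≠ ±1, u ≠ ±1, s ≠ ±u, s² - 2u² + u⁴ ≠ 0, s ≠ ±u², and v² = 1 + (-3/s² + 1/s⁴)u² + u⁴/s². Define ν = (s²-u²)/(1-u²), μ = 1 - ν(1-ν)/s², λ = μ(1-ν)/(1-μ). Then the elements 0, 1, λ, μ, ν are pairwise distinct in K (so the polynomial x(x-1)(x-λ)(x-μ)(x-ν) is squarefree and the curve y² = x(x-1)(x-λ)(x-μ)(x-ν) has genus 2). -/
theorem stmt_6 {K : Type*} [Field K] (hchar : (2 : K) ≠ 0)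
    (s u v ν μ lam : K)
    (hs : s ≠ 0) (hs1 : s ≠ 1) (hs1' : s ≠ -1)
    (hu : u ≠ 0) (hu1 : u ≠ 1) (hu1' : u ≠ -1)
    (hv : v ≠ 0)
    (hsu : s ≠ u) (hsu' : s ≠ -u)
    (hsu2 : s ≠ u ^ 2) (hsu2' : s ≠ -u ^ 2)
    (hpoly : s ^ 2 - 2 * u ^ 2 + u ^ 4 ≠ 0)
    (hcurve : v ^ 2 = 1 + (-3 / s ^ 2 + 1 / s ^ 4) * u ^ 2 + u ^ 4 / s ^ 2)
    (hν : ν = (s ^ 2 - u ^ 2) / (1 - u ^ 2))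
    (hμ : μ = 1 - ν * (1 - ν) / s ^ 2)
    (hlam : lam = μ * (1 - ν) / (1 - μ)) :
    lam ≠ 0 ∧ μ ≠ 0 ∧ ν ≠ 0 ∧ lam ≠ 1 ∧ μ ≠ 1 ∧ ν ≠ 1 ∧
      lam ≠ μ ∧ lam ≠ ν ∧ μ ≠ ν := by
  have hD : (1 : K) - u ^ 2 ≠ 0 := by
    intro h
    rcases mul_eq_zero.mp (show (1 - u) * (1 + u) = 0 by linear_combination h) with h' | h'
    · exact hu1 (by linear_combination -h')
    · exact hu1' (by linear_combination h')
  have hS : s ^ 2 - 1 ≠ 0 := by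
    intro h
    rcases mul_eq_zero.mp (show (s - 1) * (s + 1) = 0 by linear_combination h) with h' | h'
    · exact hs1 (by linear_combination h')
    · exact hs1' (by linear_combination h')
  have hN : s ^ 2 - u ^ 2 ≠ 0 := by
    intro h
    rcases mul_eq_zero.mp (show (s - u) * (s + u) = 0 by linear_combination h) with h' | h'
    · exact hsu (sub_eq_zero.mp h')
    · exact hsu' (by linear_combination h')
  have hV : s ^ 4 * v ^ 2 = s ^ 4 - 3 * s ^ 2 * u ^ 2 + u ^ 2 + s ^ 2 * u ^ 4 := by
    field_simp at hcurve
    apply mul_left_cancel₀ (pow_ne_zero 4 hs)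
    linear_combination s ^ 4 * hcurve
  have hνD : ν * (1 - u ^ 2) = s ^ 2 - u ^ 2 := by
    rw [hν]; field_simp
  have hν0 : ν ≠ 0 := by
    intro h; apply hN; rw [h, zero_mul] at hνD; exact hνD.symm
  have hν1 : ν ≠ 1 := by
    intro h; apply hS; rw [h, one_mul] at hνD; linear_combination -hνD
  have h1ν : (1 : K) - ν ≠ 0 := sub_ne_zero.mpr (Ne.symm hν1)
  have hμs : μ * s ^ 2 = s ^ 2 - ν * (1 - ν) := by
    rw [hμ]; field_simp
  have hμD : μ * (s ^ 2 * (1 - u ^ 2) ^ 2) = s ^ 4 * v ^ 2 := by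
    linear_combination (1 - u ^ 2) ^ 2 * hμs +
      (ν * (1 - u ^ 2) + (s ^ 2 - u ^ 2) - (1 - u ^ 2)) * hνD - hV
  have hμ0 : μ ≠ 0 := by
    intro h
    rw [h, zero_mul] at hμD
    exact (mul_ne_zero (pow_ne_zero 4 hs) (pow_ne_zero 2 hv)) hμD.symm
  have hμ1 : μ ≠ 1 := by
    intro h
    rw [h, one_mul] at hμs
    exact (mul_ne_zero hν0 h1ν) (by linear_combination hμs)
  have h1μ : (1 : K) - μ ≠ 0 := sub_ne_zero.mpr (Ne.symm hμ1)
  have hl1 : lam * (1 - μ) = μ * (1 - ν) := by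
    rw [hlam]; field_simp
  have hlν : lam * ν = μ * s ^ 2 := by
    have h2 : (1 - μ) * s ^ 2 = ν * (1 - ν) := by linear_combination -hμs
    have key : lam * ν * (1 - ν) = μ * s ^ 2 * (1 - ν) := by
      linear_combination -lam * h2 + s ^ 2 * hl1
    exact mul_right_cancel₀ h1ν key
  refine ⟨?_, hμ0, hν0, ?_, hμ1, hν1, ?_, ?_, ?_⟩
  · intro h
    rw [h, zero_mul] at hlν
    exact (mul_ne_zero hμ0 (pow_ne_zero 2 hs)) hlν.symm
  · intro h
    rw [h, one_mul] at hlν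
    have key : (s ^ 2 - 1) * (s ^ 2 - 2 * u ^ 2 + u ^ 4) = 0 := by
      linear_combination -hV - hμD - (1 - u ^ 2) ^ 2 * hlν + (1 - u ^ 2) * hνD
    rcases mul_eq_zero.mp key with h' | h'
    · exact hS h'
    · exact hpoly h'
  · intro h
    rw [h] at hlν
    have h' : ν = s ^ 2 := mul_left_cancel₀ hμ0 hlν
    have key : (s ^ 2 - 1) * u ^ 2 = 0 := by
      linear_combination -hνD + (1 - u ^ 2) * h'
    rcases mul_eq_zero.mp key with h'' | h''
    · exact hS h''
    · exact pow_ne_zero 2 hu h''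
  · intro h
    rw [h] at hlν
    have key : (s ^ 2 - 1) * u ^ 2 * (u ^ 2 - 1) = 0 := by
      linear_combination -hV - hμD - (1 - u ^ 2) ^ 2 * hlν +
        (ν * (1 - u ^ 2) + (s ^ 2 - u ^ 2)) * hνD
    rcases mul_eq_zero.mp key with h' | h'
    · rcases mul_eq_zero.mp h' with h'' | h''
      · exact hS h''
      · exact pow_ne_zero 2 hu h''
    · exact hD (by linear_combination -h')
  · intro h
    have key : (s ^ 2 - 1) ^ 2 * u ^ 2 = 0 := by
      linear_combination -hV - hμD + s ^ 2 * (1 - u ^ 2) ^ 2 * h +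
        s ^ 2 * (1 - u ^ 2) * hνD
    rcases mul_eq_zero.mp key with h' | h'
    · exact pow_ne_zero 2 hS h'
    · exact pow_ne_zero 2 hu h'
end
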